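/- Let u ⊆ {1,…,s} be nonempty, k ∈ {0,1,…,m−1}^{|u|}, and let w ⊆ u be nonempty. If rank(C_{u,k+1_w}) − rank(C_{u,k}) = |w| over F₂, then the generalized gain coefficient Γ^w_{u,k} = 0. -/

import Mathlib

open Finset Matrix
noncomputable section




/-- The bit vector `i⃗ ∈ F₂^m` of the integer `i = Σ_{ℓ=1}^m i_ℓ 2^{ℓ-1}`. -/
def bvec (m : ℕ) (i : ℕ) : Fin m → ZMod 2 :=
  fun ℓ => if Nat.testBit i ℓ.1 then 1 else 0

/-- The `(r+1)`-st row (i.e. `r` with 0-indexing) of an `m × m` matrix over `F₂`,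
as a vector in `F₂^m`; junk value `0` if `r ≥ m` (never used under the hypotheses below). -/
def rowAt (m : ℕ) (A : Matrix (Fin m) (Fin m) (ZMod 2)) (r : ℕ) : Fin m → ZMod 2 :=
  fun ℓ => if h : r < m then A ⟨r, h⟩ ℓ else 0

/-- The stacked matrix `C_{u,k}`: for each `j ∈ u`, the first `k j` rows of `C j`. -/
def stack {m s : ℕ} (C : Fin s → Matrix (Fin m) (Fin m) (ZMod 2))
    (u : Finset (Fin s)) (k : Fin s → ℕ) :
    Matrix ((j : {x // x ∈ u}) × Fin (k j.1)) (Fin m) (ZMod 2) :=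
  fun p => rowAt m (C p.1.1) p.2.1

/-- `∇C_{u,k}`: the matrix whose rows are the `(k j + 1)`-st rows (1-indexed) of `C j`, `j ∈ u`. -/
def grad {m s : ℕ} (C : Fin s → Matrix (Fin m) (Fin m) (ZMod 2))
    (u : Finset (Fin s)) (k : Fin s → ℕ) :
    Matrix {x // x ∈ u} (Fin m) (ZMod 2) :=
  fun j => rowAt m (C j.1) (k j.1)

/-- The coordinate `x_{ij} ∈ [0,1)` of the digital net generated by `C₁,…,C_s`:
`x_{ij} = Σ_{ℓ=1}^m y_ℓ 2^{-ℓ}` where `y = C_j · i⃗` over `F₂`. -/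
def pt {m s : ℕ} (C : Fin s → Matrix (Fin m) (Fin m) (ZMod 2)) (i : ℕ) (j : Fin s) : ℝ :=
  ∑ ℓ : Fin m, (((C j).mulVec (bvec m i) ℓ).val : ℝ) / 2 ^ (ℓ.1 + 1)

/-- The factor `N`: with `M(x,x') = max{k ∈ ℕ₀ : ⌊2^k x⌋ = ⌊2^k x'⌋}` (the number of matching
leading binary digits), `Nf x x' c` equals `1` if `M(x,x') > c` (equivalently the first `c+1`
binary digits match), `-1` if `M(x,x') = c` (the first `c` digits match but not `c+1`), and
`0` if `M(x,x') < c`. -/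
def Nf (x x' : ℝ) (c : ℕ) : ℤ :=
  if ⌊(2:ℝ) ^ (c + 1) * x⌋ = ⌊(2:ℝ) ^ (c + 1) * x'⌋ then 1
  else if ⌊(2:ℝ) ^ c * x⌋ = ⌊(2:ℝ) ^ c * x'⌋ then -1
  else 0

/-- The gain coefficient `Γ_{u,k} = 2^{-m} Σ_{i=0}^{2^m-1} Σ_{i'=0}^{2^m-1} ∏_{j∈u} N_{i,i',j}`. -/
def Gam {m s : ℕ} (C : Fin s → Matrix (Fin m) (Fin m) (ZMod 2))
    (u : Finset (Fin s)) (k : Fin s → ℕ) : ℚ :=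
  (2 ^ m : ℚ)⁻¹ * ∑ i ∈ Finset.range (2 ^ m), ∑ i' ∈ Finset.range (2 ^ m),
      ∏ j ∈ u, (Nf (pt C i j) (pt C i' j) (k j) : ℚ)

/-- The generalized gain coefficient
`Γ^w_{u,k} = Σ_{i=0}^{2^m-1} 1{C_{u,k}·i⃗ = 0} ∏_{j∈w} N_{0,i,j}` (an empty product equals 1). -/
def GamW {m s : ℕ} (C : Fin s → Matrix (Fin m) (Fin m) (ZMod 2))
    (u : Finset (Fin s)) (k : Fin s → ℕ) (w : Finset (Fin s)) : ℤ :=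
  ∑ i ∈ Finset.range (2 ^ m),
    (if (stack C u k).mulVec (bvec m i) = 0 then (1 : ℤ) else 0) *
      ∏ j ∈ w, Nf (pt C 0 j) (pt C i j) (k j)


def chi (e : ZMod 2) : ℤ := 1 - 2 * e.val

lemma chi_add (a b : ZMod 2) : chi (a + b) = chi a * chi b := by revert a b; decide

lemma chi_add_one (a : ZMod 2) : chi (a + 1) = - chi a := by revert a; decide

lemma prod_chi {α : Type*} (t : Finset α) (e : α → ZMod 2) :
    ∏ j ∈ t, chi (e j) = chi (∑ j ∈ t, e j) := by
  induction t using Finset.cons_induction with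
  | empty => simp [chi]
  | cons a t ha ih => rw [Finset.prod_cons, Finset.sum_cons, ih, chi_add]

lemma geom_half (n : ℕ) : ∑ ℓ ∈ Finset.range n, ((2:ℝ)^(ℓ+1))⁻¹ = 1 - ((2:ℝ)^n)⁻¹ := by
  induction n with
  | zero => simp
  | succ n ih =>
    rw [Finset.sum_range_succ, ih, pow_succ]
    have h : (2:ℝ)^n ≠ 0 := by positivity
    field_simp
    ring

lemma sum_dot {α : Type*} {m : ℕ} (t : Finset α) (f : α → Fin m → ZMod 2) (v : Fin m → ZMod 2) :
    (∑ j ∈ t, f j) ⬝ᵥ v = ∑ j ∈ t, f j ⬝ᵥ v := by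
  simp only [dotProduct, Finset.sum_apply, Finset.sum_mul]
  rw [Finset.sum_comm]

lemma sum_bits_lt {m c : ℕ} (y : Fin m → ZMod 2)
    (h0 : ∀ ℓ : Fin m, ℓ.1 < c → y ℓ = 0) :
    ∑ ℓ : Fin m, ((y ℓ).val : ℝ) / 2 ^ (ℓ.1 + 1) < ((2:ℝ)^c)⁻¹ := by
  by_cases hmc : m ≤ c
  · have : ∑ ℓ : Fin m, ((y ℓ).val : ℝ) / 2 ^ (ℓ.1 + 1) = 0 := by
      apply Finset.sum_eq_zero
      intro ℓ _
      rw [h0 ℓ (lt_of_lt_of_le ℓ.2 hmc)]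
      simp
    rw [this]; positivity
  · push_neg at hmc
    have geom_half : ∀ n : ℕ, ∑ ℓ ∈ Finset.range n, ((2:ℝ)^(ℓ+1))⁻¹ = 1 - ((2:ℝ)^n)⁻¹ := by
      intro n
      induction n with
      | zero => simp
      | succ n ih =>
        rw [Finset.sum_range_succ, ih, pow_succ]
        have h : (2:ℝ)^n ≠ 0 := by positivity
        field_simp; ring
    have step1 : ∑ ℓ : Fin m, ((y ℓ).val : ℝ) / 2 ^ (ℓ.1 + 1)
        ≤ ∑ ℓ ∈ Finset.range m, (if ℓ < c then 0 else ((2:ℝ)^(ℓ+1))⁻¹) := by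
      rw [← Fin.sum_univ_eq_sum_range (fun ℓ => if ℓ < c then (0:ℝ) else ((2:ℝ)^(ℓ+1))⁻¹) m]
      apply Finset.sum_le_sum
      intro ℓ _
      by_cases h : ℓ.1 < c
      · simp [h, h0 ℓ h]
      · simp only [h, if_false]
        have h1 : ((y ℓ).val : ℝ) ≤ 1 := by
          have := ZMod.val_lt (y ℓ)
          exact_mod_cast Nat.lt_succ_iff.mp this
        rw [div_eq_mul_inv]
        have h2 : (0:ℝ) < ((2:ℝ)^(ℓ.1+1))⁻¹ := by positivity
        nlinarith
    have step2 : ∑ ℓ ∈ Finset.range m, (if ℓ < c then 0 else ((2:ℝ)^(ℓ+1))⁻¹)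
        = ∑ ℓ ∈ Finset.Ico c m, ((2:ℝ)^(ℓ+1))⁻¹ := by
      rw [Finset.range_eq_Ico, ← Finset.sum_Ico_consecutive _ (Nat.zero_le c) (le_of_lt hmc)]
      rw [Finset.sum_eq_zero (fun ℓ hℓ => by
        simp [if_pos (Finset.mem_Ico.mp hℓ).2]), zero_add]
      apply Finset.sum_congr rfl
      intro ℓ hℓ
      rw [if_neg (not_lt.mpr (Finset.mem_Ico.mp hℓ).1)]
    have step3 : ∑ ℓ ∈ Finset.Ico c m, ((2:ℝ)^(ℓ+1))⁻¹
        = ((2:ℝ)^c)⁻¹ * (1 - ((2:ℝ)^(m-c))⁻¹) := by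
      rw [Finset.sum_Ico_eq_sum_range, ← geom_half (m - c), Finset.mul_sum]
      apply Finset.sum_congr rfl
      intro t _
      rw [show c + t + 1 = c + (t + 1) from rfl, pow_add, mul_inv]
    have hlt : ((2:ℝ)^c)⁻¹ * (1 - ((2:ℝ)^(m-c))⁻¹) < ((2:ℝ)^c)⁻¹ := by
      have h1 : (0:ℝ) < ((2:ℝ)^c)⁻¹ := by positivity
      have h2 : (0:ℝ) < ((2:ℝ)^(m-c))⁻¹ := by positivity
      nlinarith
    calc ∑ ℓ : Fin m, ((y ℓ).val : ℝ) / 2 ^ (ℓ.1 + 1)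
        ≤ _ := step1
      _ = _ := step2
      _ = _ := step3
      _ < _ := hlt

lemma floor_pow_zero {x : ℝ} (hx0 : 0 ≤ x) {c : ℕ} (hx : x < ((2:ℝ)^c)⁻¹) :
    ⌊(2:ℝ)^c * x⌋ = 0 := by
  rw [Int.floor_eq_zero_iff]
  have h2 : (0:ℝ) < 2^c := by positivity
  constructor
  · positivity
  · calc (2:ℝ)^c * x < 2^c * (2^c)⁻¹ := by exact mul_lt_mul_of_pos_left hx h2
      _ = 1 := mul_inv_cancel₀ (ne_of_gt h2)

lemma floor_pow_one {x : ℝ} {c : ℕ} (h1 : ((2:ℝ)^(c+1))⁻¹ ≤ x) (h2 : x < ((2:ℝ)^c)⁻¹) :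
    ⌊(2:ℝ)^(c+1) * x⌋ = 1 := by
  have hp : (0:ℝ) < 2^(c+1) := by positivity
  have hpc : (0:ℝ) < 2^c := by positivity
  rw [show (1:ℤ) = ((1:ℤ):ℤ) from rfl, Int.floor_eq_iff]
  constructor
  · push_cast
    calc (1:ℝ) = 2^(c+1) * (2^(c+1))⁻¹ := (mul_inv_cancel₀ (ne_of_gt hp)).symm
      _ ≤ 2^(c+1) * x := by exact mul_le_mul_of_nonneg_left h1 (le_of_lt hp)
  · push_cast
    calc (2:ℝ)^(c+1) * x < 2^(c+1) * (2^c)⁻¹ := mul_lt_mul_of_pos_left h2 hp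
      _ = 2 := by
          rw [pow_succ, mul_comm ((2:ℝ)^c) 2, mul_assoc, mul_inv_cancel₀ (ne_of_gt hpc), mul_one]
      _ ≤ 1 + 1 := by norm_num

lemma bvec_zero (m : ℕ) : bvec m 0 = 0 := by
  funext ℓ; simp [bvec]

lemma bvec_xor (m i n : ℕ) : bvec m (i ^^^ n) = bvec m i + bvec m n := by
  funext ℓ
  simp only [bvec, Pi.add_apply, Nat.testBit_xor]
  cases hi : Nat.testBit i ℓ.1 <;> cases hn : Nat.testBit n ℓ.1 <;> simp <;> decide

lemma pt_zero {m s : ℕ} (C : Fin s → Matrix (Fin m) (Fin m) (ZMod 2)) (j : Fin s) :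
    pt C 0 j = 0 := by
  simp [pt, bvec_zero, Matrix.mulVec_zero]

lemma row_dot {m s : ℕ} (C : Fin s → Matrix (Fin m) (Fin m) (ZMod 2)) (j : Fin s)
    (r : ℕ) (hr : r < m) (v : Fin m → ZMod 2) :
    rowAt m (C j) r ⬝ᵥ v = (C j).mulVec v ⟨r, hr⟩ := by
  have h : rowAt m (C j) r = fun ℓ => C j ⟨r, hr⟩ ℓ := by
    funext ℓ; simp [rowAt, hr]
  rw [h]
  rfl

lemma Nf_eval {m s : ℕ} (C : Fin s → Matrix (Fin m) (Fin m) (ZMod 2)) (i : ℕ) (j : Fin s)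
    {c : ℕ} (hc : c < m)
    (h0 : ∀ ℓ : Fin m, ℓ.1 < c → (C j).mulVec (bvec m i) ℓ = 0) :
    Nf (pt C 0 j) (pt C i j) c = chi ((C j).mulVec (bvec m i) ⟨c, hc⟩) := by
  set y := (C j).mulVec (bvec m i) with hy
  have hpt : pt C i j = ∑ ℓ : Fin m, ((y ℓ).val : ℝ) / 2 ^ (ℓ.1 + 1) := rfl
  have hx0 : 0 ≤ pt C i j := by
    rw [hpt]; exact Finset.sum_nonneg fun ℓ _ => by positivity
  have hlt : pt C i j < ((2:ℝ)^c)⁻¹ := by rw [hpt]; exact sum_bits_lt y h0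
  have hfc : ⌊(2:ℝ)^c * pt C i j⌋ = 0 := floor_pow_zero hx0 hlt
  have hdich : ∀ e : ZMod 2, e = 0 ∨ e = 1 := by decide
  rw [Nf, pt_zero, mul_zero, mul_zero, Int.floor_zero]
  rcases hdich (y ⟨c, hc⟩) with h | h
  · have h0' : ∀ ℓ : Fin m, ℓ.1 < c + 1 → y ℓ = 0 := by
      intro ℓ hℓ
      rcases Nat.lt_succ_iff_lt_or_eq.mp hℓ with h' | h'
      · exact h0 ℓ h'
      · have : ℓ = ⟨c, hc⟩ := Fin.ext h'
        rw [this]; exact h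
    have : ⌊(2:ℝ)^(c+1) * pt C i j⌋ = 0 := by
      apply floor_pow_zero hx0
      rw [hpt]; exact sum_bits_lt y h0'
    rw [if_pos this.symm, h]
    rfl
  · have hge : ((2:ℝ)^(c+1))⁻¹ ≤ pt C i j := by
      rw [hpt]
      have := Finset.single_le_sum (f := fun ℓ : Fin m => ((y ℓ).val : ℝ) / 2 ^ (ℓ.1 + 1))
        (fun ℓ _ => by positivity) (Finset.mem_univ ⟨c, hc⟩)
      calc ((2:ℝ)^(c+1))⁻¹ = ((y ⟨c,hc⟩).val : ℝ) / 2 ^ (c + 1) := by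
            rw [h, show ((1:ZMod 2).val) = 1 from rfl]; push_cast; rw [one_div]
        _ ≤ _ := this
    have h1 : ⌊(2:ℝ)^(c+1) * pt C i j⌋ = 1 := floor_pow_one hge hlt
    rw [if_neg (by rw [h1]; norm_num), if_pos hfc.symm, h]
    rfl

lemma exists_v {m s : ℕ} (C : Fin s → Matrix (Fin m) (Fin m) (ZMod 2))
    (u : Finset (Fin s)) (k : Fin s → ℕ)
    (w : Finset (Fin s)) (hwu : w ⊆ u) (hw : w.Nonempty)
    (hrank : (stack C u (fun j => if j ∈ w then k j + 1 else k j)).rank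
      - (stack C u k).rank = w.card) :
    ∃ v : Fin m → ZMod 2, (stack C u k).mulVec v = 0 ∧
      (∑ j ∈ w, rowAt m (C j) (k j)) ⬝ᵥ v = 1 := by
  classical
  set A := stack C u k with hA
  set g : Fin m → ZMod 2 := ∑ j ∈ w, rowAt m (C j) (k j) with hg
  set R := Submodule.span (ZMod 2) (Set.range A) with hR
  by_contra hcon
  push_neg at hcon
  have hdich : ∀ e : ZMod 2, e ≠ 1 → e = 0 := by decide
  have hker : ∀ v, A.mulVec v = 0 → g ⬝ᵥ v = 0 := fun v hv => hdich _ (hcon v hv)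
  -- the matrix B: rows of A plus the extra row g
  set B : Matrix ((Σ j : {x // x ∈ u}, Fin (k j.1)) ⊕ Unit) (Fin m) (ZMod 2) :=
    Matrix.of (Sum.elim A (fun _ => g)) with hB
  have hBv : ∀ v, B.mulVec v = 0 ↔ A.mulVec v = 0 ∧ g ⬝ᵥ v = 0 := by
    intro v
    constructor
    · intro h
      exact ⟨funext fun q => congrFun h (Sum.inl q), congrFun h (Sum.inr ())⟩
    · rintro ⟨h1, h2⟩
      funext p
      cases p with
      | inl q => exact congrFun h1 q
      | inr _ => exact h2
  have hkereq : LinearMap.ker B.mulVecLin = LinearMap.ker A.mulVecLin := by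
    ext v
    simp only [LinearMap.mem_ker, Matrix.mulVecLin_apply]
    rw [hBv]
    exact ⟨fun h => h.1, fun h => ⟨h, hker v h⟩⟩
  have hradd : B.rank = A.rank := by
    have h1 := LinearMap.finrank_range_add_finrank_ker (A.mulVecLin)
    have h2 := LinearMap.finrank_range_add_finrank_ker (B.mulVecLin)
    rw [hkereq] at h2
    unfold Matrix.rank
    omega
  have hrowB : Submodule.span (ZMod 2) (Set.range B)
      = R ⊔ Submodule.span (ZMod 2) {g} := by
    have hrange : Set.range B = Set.range A ∪ {g} := by
      have := Set.Sum.elim_range (A : _ → Fin m → ZMod 2) (fun _ : Unit => g)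
      rw [Set.range_const] at this
      exact this
    rw [hrange, Submodule.span_union]
  have hRB : Module.finrank (ZMod 2)
      (R ⊔ Submodule.span (ZMod 2) {g} : Submodule (ZMod 2) (Fin m → ZMod 2))
      = Module.finrank (ZMod 2) R := by
    have hA' : A.rank = Module.finrank (ZMod 2) (Submodule.span (ZMod 2) (Set.range A)) :=
      Matrix.rank_eq_finrank_span_row A
    have hB' : B.rank = Module.finrank (ZMod 2) (Submodule.span (ZMod 2) (Set.range B)) :=
      Matrix.rank_eq_finrank_span_row B
    rw [hrowB] at hB'
    rw [← hB', ← hA', hradd]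
  have heq : R = R ⊔ Submodule.span (ZMod 2) {g} :=
    Submodule.eq_of_le_of_finrank_le le_sup_left (le_of_eq hRB)
  have hgR : g ∈ R := by
    rw [heq]
    exact Submodule.mem_sup_right (Submodule.mem_span_singleton_self g)
  -- now derive the contradiction with the rank hypothesis
  obtain ⟨j₀, hj₀⟩ := hw
  set k' : Fin s → ℕ := fun j => if j ∈ w then k j + 1 else k j with hk'
  set A' := stack C u k' with hA'
  set t : Finset (Fin m → ZMod 2) := (w.erase j₀).image (fun j => rowAt m (C j) (k j)) with ht
  set S := Submodule.span (ZMod 2) (t : Set (Fin m → ZMod 2)) with hS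
  have hsub : Submodule.span (ZMod 2) (Set.range A') ≤ R ⊔ S := by
    rw [Submodule.span_le]
    rintro x ⟨⟨⟨j, hj⟩, r⟩, rfl⟩
    have hr2 : r.1 < (if j ∈ w then k j + 1 else k j) := r.2
    have hval : A' ⟨⟨j, hj⟩, r⟩ = rowAt m (C j) r.1 := rfl
    by_cases hr : r.1 < k j
    · rw [hval, show rowAt m (C j) r.1 = A ⟨⟨j, hj⟩, ⟨r.1, hr⟩⟩ from rfl]
      exact Submodule.mem_sup_left (Submodule.subset_span (Set.mem_range_self _))
    · have hjw : j ∈ w := by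
        by_contra hjw
        rw [if_neg hjw] at hr2
        exact hr hr2
      have hrk : r.1 = k j := by
        rw [if_pos hjw] at hr2
        omega
      rw [hval, hrk]
      by_cases hjj : j = j₀
      · subst hjj
        have hsum : ∑ j' ∈ w.erase j, rowAt m (C j') (k j') + rowAt m (C j) (k j) = g :=
          Finset.sum_erase_add w _ hj₀
        have hrepr : rowAt m (C j) (k j) = g - ∑ j' ∈ w.erase j, rowAt m (C j') (k j') := by
          rw [← hsum]; abel
        rw [hrepr]
        apply Submodule.sub_mem
        · exact Submodule.mem_sup_left hgR
        · apply Submodule.sum_mem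
          intro j' hj'
          refine Submodule.mem_sup_right (Submodule.subset_span ?_)
          rw [ht, Finset.coe_image]
          exact Set.mem_image_of_mem _ (by exact_mod_cast hj')
      · refine Submodule.mem_sup_right (Submodule.subset_span ?_)
        rw [ht, Finset.coe_image]
        exact Set.mem_image_of_mem _ (by
          simp only [Finset.coe_erase, Set.mem_diff, Set.mem_singleton_iff]
          exact ⟨by exact_mod_cast hjw, hjj⟩)
  have hfin : Module.finrank (ZMod 2) (Submodule.span (ZMod 2) (Set.range A'))
      ≤ Module.finrank (ZMod 2) R + (w.card - 1) := by
    have h1 : Module.finrank (ZMod 2) (Submodule.span (ZMod 2) (Set.range A'))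
        ≤ Module.finrank (ZMod 2) (R ⊔ S : Submodule (ZMod 2) (Fin m → ZMod 2)) :=
      Submodule.finrank_mono hsub
    have h2 := Submodule.finrank_sup_add_finrank_inf_eq R S
    have h3 : Module.finrank (ZMod 2) S ≤ w.card - 1 := by
      have h4 := finrank_span_finset_le_card (R := ZMod 2) t
      rw [Set.finrank] at h4
      have h5 : t.card ≤ (w.erase j₀).card := Finset.card_image_le
      have h6 : (w.erase j₀).card = w.card - 1 := Finset.card_erase_of_mem hj₀
      rw [← hS] at h4
      omega
    omega
  have hwcard : 1 ≤ w.card := Finset.card_pos.mpr ⟨j₀, hj₀⟩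
  have hArk : A.rank = Module.finrank (ZMod 2) (Submodule.span (ZMod 2) (Set.range A)) :=
    Matrix.rank_eq_finrank_span_row A
  have hA'rk : A'.rank = Module.finrank (ZMod 2) (Submodule.span (ZMod 2) (Set.range A')) :=
    Matrix.rank_eq_finrank_span_row A'
  rw [← hA'rk] at hfin
  rw [← hArk] at hfin
  omega

lemma exists_nat_of_vec {m : ℕ} (v : Fin m → ZMod 2) :
    ∃ n : ℕ, n < 2 ^ m ∧ bvec m n = v := by
  classical
  set F : Fin m → Fin 2 := fun ℓ => ⟨(v ℓ).val, ZMod.val_lt _⟩ with hF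
  set N : Fin (2 ^ m) := finFunctionFinEquiv F with hN
  refine ⟨N.1, N.2, ?_⟩
  funext ℓ
  have hsymm : (finFunctionFinEquiv.symm N) ℓ = F ℓ := by
    rw [hN, Equiv.symm_apply_apply]
  have hdiv : (N : ℕ) / 2 ^ ℓ.1 % 2 = (v ℓ).val := by
    have h1 : ((finFunctionFinEquiv.symm N) ℓ : ℕ) = (N : ℕ) / 2 ^ ℓ.1 % 2 := rfl
    rw [hsymm] at h1
    exact h1.symm
  have hdich : ∀ e : ZMod 2, e = 0 ∨ e = 1 := by decide
  rw [bvec]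
  rcases hdich (v ℓ) with h | h <;> rw [h] <;> rw [h] at hdiv
  · rw [if_neg]
    rw [Nat.testBit_eq_decide_div_mod_eq, hdiv]
    simp [ZMod.val_zero]
  · rw [if_pos]
    rw [Nat.testBit_eq_decide_div_mod_eq, hdiv]
    simp [ZMod.val_one]

theorem statement (m s : ℕ) (hm : 1 ≤ m) (hs : 1 ≤ s)
    (C : Fin s → Matrix (Fin m) (Fin m) (ZMod 2))
    (u : Finset (Fin s)) (hu : u.Nonempty)
    (k : Fin s → ℕ) (hk : ∀ j ∈ u, k j ≤ m - 1)
    (w : Finset (Fin s)) (hwu : w ⊆ u) (hw : w.Nonempty)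
    (hrank : (stack C u (fun j => if j ∈ w then k j + 1 else k j)).rank
      - (stack C u k).rank = w.card) :
    GamW C u k w = 0 := by
  classical
  obtain ⟨v₀, hv₀A, hv₀g⟩ := exists_v C u k w hwu hw hrank
  obtain ⟨n₀, hn₀lt, hbv⟩ := exists_nat_of_vec v₀
  have hn₀ne : n₀ ≠ 0 := by
    intro h
    rw [h, bvec_zero] at hbv
    rw [← hbv, dotProduct_zero] at hv₀g
    exact zero_ne_one hv₀g
  have hkmlt : ∀ j ∈ u, k j < m := fun j hj => by have := hk j hj; omega
  have hker0 : ∀ (i : ℕ), (stack C u k).mulVec (bvec m i) = 0 →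
      ∀ j (hj : j ∈ u), ∀ ℓ : Fin m, ℓ.1 < k j → (C j).mulVec (bvec m i) ℓ = 0 := by
    intro i hi j hj ℓ hℓ
    have h1 := congrFun hi ⟨⟨j, hj⟩, ⟨ℓ.1, hℓ⟩⟩
    rw [show (stack C u k).mulVec (bvec m i) ⟨⟨j, hj⟩, ⟨ℓ.1, hℓ⟩⟩
        = rowAt m (C j) ℓ.1 ⬝ᵥ bvec m i from rfl, row_dot C j ℓ.1 ℓ.2] at h1
    simpa using h1
  set g : Fin m → ZMod 2 := ∑ j ∈ w, rowAt m (C j) (k j) with hgdef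
  have hprod : ∀ (i : ℕ), (stack C u k).mulVec (bvec m i) = 0 →
      ∏ j ∈ w, Nf (pt C 0 j) (pt C i j) (k j) = chi (g ⬝ᵥ bvec m i) := by
    intro i hi
    have hcongr : ∀ j ∈ w, Nf (pt C 0 j) (pt C i j) (k j)
        = chi (rowAt m (C j) (k j) ⬝ᵥ bvec m i) := by
      intro j hj
      have hjm : k j < m := hkmlt j (hwu hj)
      rw [Nf_eval C i j hjm (hker0 i hi j (hwu hj)), row_dot C j (k j) hjm]
    rw [Finset.prod_congr rfl hcongr, prod_chi, hgdef, ← sum_dot]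
  rw [GamW]
  apply Finset.sum_involution (fun i _ => i ^^^ n₀)
  · -- f a + f (a ^^^ n₀) = 0
    intro a ha
    have hbx : bvec m (a ^^^ n₀) = bvec m a + v₀ := by rw [bvec_xor, hbv]
    have hAx : (stack C u k).mulVec (bvec m (a ^^^ n₀))
        = (stack C u k).mulVec (bvec m a) := by
      rw [hbx, Matrix.mulVec_add, hv₀A, add_zero]
    by_cases hkerA : (stack C u k).mulVec (bvec m a) = 0
    · rw [if_pos hkerA, if_pos (by rw [hAx]; exact hkerA), one_mul, one_mul]
      rw [hprod a hkerA, hprod _ (by rw [hAx]; exact hkerA)]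
      rw [hbx, dotProduct_add, hv₀g, chi_add_one]
      exact add_neg_cancel _
    · rw [if_neg hkerA, if_neg (by rw [hAx]; exact hkerA), zero_mul, zero_mul, add_zero]
  · -- injectivity-ish
    intro a ha hfa
    intro h
    apply hn₀ne
    have h2 : a ^^^ (a ^^^ n₀) = a ^^^ a := by rw [h]
    rwa [← Nat.xor_assoc, Nat.xor_self, Nat.zero_xor] at h2
  · -- membership
    intro a ha
    exact Finset.mem_range.mpr (Nat.xor_lt_two_pow (Finset.mem_range.mp ha) hn₀lt)
  · -- involution
    intro a ha
    show (a ^^^ n₀) ^^^ n₀ = a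
    rw [Nat.xor_assoc, Nat.xor_self, Nat.xor_zero]

end
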